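/- Fix k_Max ∈ ℕ and for q ∈ ℕ set W'_q^{k_Max} = W'_q ∩ {0, 1, …, k_Max}. Then for every q ∈ ℕ, W'_{q+1}^{k_Max} = [ ( ⋃_{m=0}^{min(p_{q+1}−1, ⌊k_Max/Π'_q⌋)} { w + m·Π'_q : w ∈ W'_q^{k_Max} } ) \ { (p_{q+1}−3)/2 + y·p_{q+1} : y ∈ ℕ, 0 ≤ y ≤ min(Π'_q − 1, ⌊(2k_Max + 3 − p_{q+1})/(2p_{q+1})⌋) } ] ∩ {0, 1, …, k_Max}. -/

import Mathlib

/-- `nthPrime q` is `p_q`, the `q`-th prime (`p_0 = 2`, `p_1 = 3`, …). -/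
noncomputable def nthPrime (q : ℕ) : ℕ := Nat.nth Nat.Prime q

/-- `Π_q = ∏_{k=0}^{q} p_k`. -/
noncomputable def primorialQ (q : ℕ) : ℕ := ∏ k ∈ Finset.range (q + 1), nthPrime k

/-- `W_q = {x : 1 ≤ x ≤ Π_q − 1, gcd(x, Π_q) = 1}`. -/
def wheelW (q : ℕ) : Set ℕ :=
  {x | 1 ≤ x ∧ x ≤ primorialQ q - 1 ∧ Nat.gcd x (primorialQ q) = 1}

/-- `Π'_q = Π_q / 2 = ∏_{k=1}^{q} p_k`. -/
noncomputable def primorialQ' (q : ℕ) : ℕ := ∏ k ∈ Finset.Icc 1 q, nthPrime k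

/-- `W'_q = {(n−3)/2 : n ∈ W_q, n ≥ 3} ∪ {Π'_q − 1}`. -/
def wheelW' (q : ℕ) : Set ℕ :=
  {m | ∃ n ∈ wheelW q, 3 ≤ n ∧ m = (n - 3) / 2} ∪ {primorialQ' q - 1}

/-- `W'_q ∩ {0, …, k_Max}`, the truncated index wheel. -/
def wheelW'T (kMax q : ℕ) : Set ℕ := wheelW' q ∩ Set.Iic kMax

lemma nthPrime_prime (q : ℕ) : (nthPrime q).Prime := Nat.prime_nth_prime q
lemma nthPrime_zero : nthPrime 0 = 2 := Nat.nth_prime_zero_eq_two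
lemma nthPrime_succ_ge (q : ℕ) : 3 ≤ nthPrime (q+1) := by
  have h := (Nat.nth_lt_nth Nat.infinite_setOf_prime (k := 0) (n := q+1)).2 (Nat.succ_pos q)
  rw [Nat.nth_prime_zero_eq_two] at h
  exact h
lemma nthPrime_succ_odd (q : ℕ) : Odd (nthPrime (q+1)) :=
  (nthPrime_prime (q+1)).odd_of_ne_two (by have := nthPrime_succ_ge q; omega)
lemma primorialQ'_pos (q : ℕ) : 0 < primorialQ' q :=
  Finset.prod_pos fun k _ => (nthPrime_prime k).pos
lemma primorialQ_eq (q : ℕ) : primorialQ q = 2 * primorialQ' q := by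
  rw [primorialQ, primorialQ', Finset.range_eq_Ico,
    Finset.prod_eq_prod_Ico_succ_bot (Nat.succ_pos q), nthPrime_zero,
    ← Finset.Ico_add_one_right_eq_Icc]
  rfl
lemma primorialQ'_succ (q : ℕ) : primorialQ' (q+1) = primorialQ' q * nthPrime (q+1) := by
  rw [primorialQ', primorialQ', Finset.prod_Icc_succ_top (by omega)]

lemma mem_wheelW' (q x : ℕ) :
    x ∈ wheelW' q ↔ x + 1 ≤ primorialQ' q ∧ Nat.Coprime (2 * x + 3) (primorialQ q) := by
  have hP : 0 < primorialQ' q := primorialQ'_pos q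
  have hPQ : primorialQ q = 2 * primorialQ' q := primorialQ_eq q
  constructor
  · rintro (⟨n, ⟨h1, h2, hg⟩, h3, hx⟩ | hx)
    · have hodd : ¬ 2 ∣ n := by
        intro hd
        have : (2 : ℕ) ∣ Nat.gcd n (primorialQ q) :=
          Nat.dvd_gcd hd (by rw [hPQ]; exact ⟨_, rfl⟩)
        omega
      have hn : n = 2 * x + 3 := by omega
      subst hn
      exact ⟨by omega, hg⟩
    · simp only [Set.mem_singleton_iff] at hx
      subst hx
      constructor
      · omega
      · have h5 : 2 * (primorialQ' q - 1) + 3 = primorialQ q + 1 := by omega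
        rw [h5]
        simp
  · rintro ⟨hb, hc⟩
    by_cases hx : x = primorialQ' q - 1
    · right; simp [hx]
    · left
      exact ⟨2*x+3, ⟨by omega, by omega, hc⟩, by omega, by omega⟩

/-- truncated index wheel turn: for every `q`,
`W'_{q+1}^{k_Max} = [(⋃_{m=0}^{min(p_{q+1}−1, ⌊k_Max/Π'_q⌋)} (W'_q^{k_Max} + m·Π'_q))
  \ {(p_{q+1}−3)/2 + y·p_{q+1} : 0 ≤ y ≤ min(Π'_q−1, ⌊(2k_Max+3−p_{q+1})/(2p_{q+1})⌋)}]
  ∩ {0, …, k_Max}`. -/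
theorem truncated_index_wheel_turn (kMax q : ℕ) :
    wheelW'T kMax (q + 1) =
      ((⋃ m ∈ Set.Iic (min (nthPrime (q + 1) - 1) (kMax / primorialQ' q)),
          (fun w => w + m * primorialQ' q) '' wheelW'T kMax q) \
        {x | ∃ y : ℕ, (y ≤ primorialQ' q - 1 ∧
            (y : ℤ) ≤ (2 * (kMax : ℤ) + 3 - (nthPrime (q + 1) : ℤ)) /
              (2 * (nthPrime (q + 1) : ℤ))) ∧
          x = (nthPrime (q + 1) - 3) / 2 + y * nthPrime (q + 1)}) ∩ Set.Iic kMax := by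
  set p := nthPrime (q+1) with hpdef
  set P := primorialQ' q with hPdef
  have hp3 : 3 ≤ p := nthPrime_succ_ge q
  have hpr : p.Prime := nthPrime_prime (q+1)
  have hPpos : 0 < P := primorialQ'_pos q
  have h2 : 2 * ((p-3)/2) = p - 3 := by
    obtain ⟨c, hc⟩ := nthPrime_succ_odd q
    omega
  have hQ : primorialQ (q+1) = primorialQ q * p := Finset.prod_range_succ _ _
  have hP' : primorialQ' (q+1) = P * p := primorialQ'_succ q
  have hc2 : Nat.Coprime p 2 := (Nat.Prime.coprime_iff_not_dvd hpr).2
    (fun h => by have := Nat.le_of_dvd (by norm_num) h; omega)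
  have hcp : ∀ a : ℕ, Nat.Coprime a p ↔ ¬ p ∣ a :=
    fun a => Nat.coprime_comm.trans (hpr.coprime_iff_not_dvd)
  have hdvd : ∀ x : ℕ, (p ∣ 2*x+3) ↔ ∃ y, x = (p-3)/2 + y*p := by
    intro x
    constructor
    · intro hd
      have hxge : p ≤ 2*x+3 := Nat.le_of_dvd (by omega) hd
      have h5 : p ∣ 2*(x - (p-3)/2) := by
        have he : 2*(x - (p-3)/2) = 2*x+3 - p := by omega
        rw [he]
        exact Nat.dvd_sub hd dvd_rfl
      obtain ⟨y, hy⟩ := hc2.dvd_of_dvd_mul_left h5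
      have hcm : p * y = y * p := mul_comm _ _
      exact ⟨y, by omega⟩
    · rintro ⟨y, rfl⟩
      have he : 2*((p-3)/2 + y*p)+3 = p * (2*y+1) := by
        have : p*(2*y+1) = 2*(y*p) + p := by ring
        omega
      rw [he]
      exact Dvd.intro _ rfl
  have key : ∀ y : ℕ,
      ((y:ℤ) ≤ (2*(kMax:ℤ)+3-(p:ℤ))/(2*(p:ℤ))) ↔ (p-3)/2 + y*p ≤ kMax := by
    intro y
    rw [Int.le_ediv_iff_mul_le (by positivity)]
    have ht : (y:ℤ) * (2*(p:ℤ)) = 2 * ((y*p : ℕ) : ℤ) := by push_cast; ring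
    rw [ht]
    generalize (y*p : ℕ) = t
    omega
  have hchar : ∀ x : ℕ, x ∈ wheelW' (q+1) ↔
      x + 1 ≤ P * p ∧ Nat.Coprime (2*x+3) (primorialQ q) ∧ ¬ p ∣ (2*x+3) := by
    intro x
    simp only [mem_wheelW', hP', hQ, Nat.coprime_mul_iff_right, hcp, and_assoc]
  ext x
  simp only [wheelW'T, Set.mem_inter_iff, Set.mem_Iic, Set.mem_diff, Set.mem_iUnion,
    Set.mem_image, Set.mem_setOf_eq, exists_prop, le_min_iff, hchar, mem_wheelW',
    ← hPdef, ← hpdef]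
  constructor
  · rintro ⟨⟨hb, hc, hnd⟩, hk⟩
    refine ⟨⟨⟨x / P, ⟨?_, Nat.div_le_div_right hk⟩, x % P, ⟨⟨?_, ?_⟩, Nat.le_trans (Nat.mod_le x P) hk⟩, ?_⟩, ?_⟩, hk⟩
    · have hlt : x / P < p := by
        rw [Nat.div_lt_iff_lt_mul hPpos]
        have h0 : 0 < P * p := by positivity
        have hcm : p * P = P * p := mul_comm _ _
        omega
      omega
    · have := Nat.mod_lt x hPpos
      omega
    · -- coprimality of the residue
      have hx' : 2*x+3 = (2*(x % P)+3) + (x / P)*(2*P) := by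
        have := Nat.mod_add_div' x P
        nlinarith [Nat.mod_add_div' x P]
      rw [primorialQ_eq, ← hPdef] at hc ⊢
      rw [hx'] at hc
      exact (Nat.coprime_add_mul_right_left _ _ _).1 hc
    · exact Nat.mod_add_div' x P
    · rintro ⟨y, -, hy⟩
      exact hnd ((hdvd x).2 ⟨y, hy⟩)
  · rintro ⟨⟨⟨m, ⟨hm1, hm2⟩, w, ⟨⟨hwW, hwk⟩, hxeq⟩⟩, hnot⟩, hk⟩
    obtain ⟨hw1, hwc⟩ := hwW
    have hm1' : m < p := by omega
    have hb : x + 1 ≤ P * p := by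
      calc x + 1 = (w+1) + m*P := by omega
        _ ≤ P + m*P := Nat.add_le_add_right hw1 _
        _ = (m+1)*P := by ring
        _ ≤ p*P := Nat.mul_le_mul_right P hm1'
        _ = P*p := mul_comm _ _
    refine ⟨⟨hb, ?_, ?_⟩, hk⟩
    · rw [primorialQ_eq, ← hPdef] at hwc ⊢
      have hx' : 2*x+3 = (2*w+3) + m*(2*P) := by
        have : 2*(m*P) = m*(2*P) := by ring
        omega
      rw [hx']
      exact (Nat.coprime_add_mul_right_left _ _ _).2 hwc
    · intro hd
      obtain ⟨y, hy⟩ := (hdvd x).1 hd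
      refine hnot ⟨y, ⟨?_, (key y).2 (by omega)⟩, hy⟩
      have hyp : y * p ≤ x := by omega
      have hyp2 : y * p < P * p := by omega
      have := Nat.lt_of_mul_lt_mul_right hyp2
      omega
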